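/- Let β ∈ ℝ, γ > 0, and let μ, ν be compactly supported probability measures on ℝ with infinite support such that μ = Φ_{β,γ}[ν]. Then for every polynomial f ∈ ℝ[x], L_ν[ L_μ[f] ] − γ^{−1} (x − β) L_μ[f] = γ^{−1} ( ∫ f dμ − f ). -/

import Mathlib

open MeasureTheory Polynomial

/-- Moments of a measure on ℝ. -/
noncomputable def mom (ρ : Measure ℝ) (k : ℕ) : ℝ := ∫ x, x ^ k ∂ρ

/-- The operator `L_ρ` on polynomials, defined via the moment sequence `m` of `ρ`:
`L[x^n] = Σ_{k=0}^{n-1} m_{n-1-k} x^k`. -/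
noncomputable def Lop (m : ℕ → ℝ) (f : Polynomial ℝ) : Polynomial ℝ :=
  f.sum fun n a => C a * ∑ k ∈ Finset.range n, C (m (n - 1 - k)) * X ^ k

/-- A measure has compact support. -/
def CompactSupp (μ : Measure ℝ) : Prop := ∃ K : Set ℝ, IsCompact K ∧ μ Kᶜ = 0

/-- The (topological) support of a measure on ℝ. -/
def msupport (μ : Measure ℝ) : Set ℝ := {x | ∀ U ∈ nhds x, μ U ≠ 0}

/-- `JacobiShift β γ mν mμ` says (at the level of moment sequences) that `μ = Φ_{β,γ}[ν]`. -/
def JacobiShift (β γ : ℝ) (mν mμ : ℕ → ℝ) : Prop :=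
  ∀ n : ℕ, 1 ≤ n →
    mμ n = β * mμ (n - 1) + γ * ∑ i ∈ Finset.range (n - 1), mν i * mμ (n - 2 - i)

lemma Lop_monomial (m : ℕ → ℝ) (n : ℕ) (a : ℝ) :
    Lop m (monomial n a) = C a * ∑ k ∈ Finset.range n, C (m (n - 1 - k)) * X ^ k := by
  unfold Lop
  rw [Polynomial.sum_monomial_index]
  simp

lemma Lop_zero (m : ℕ → ℝ) : Lop m 0 = 0 := Polynomial.sum_zero_index _

lemma Lop_add (m : ℕ → ℝ) (p q : Polynomial ℝ) : Lop m (p + q) = Lop m p + Lop m q := by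
  unfold Lop
  rw [Polynomial.sum_add_index]
  · intro n; simp
  · intro n a b; rw [C_add, add_mul]

lemma Lop_sum (m : ℕ → ℝ) {ι : Type*} (s : Finset ι) (f : ι → Polynomial ℝ) :
    Lop m (∑ i ∈ s, f i) = ∑ i ∈ s, Lop m (f i) := by
  induction s using Finset.cons_induction with
  | empty => simp [Lop_zero]
  | cons a s h ih => rw [Finset.sum_cons, Lop_add, ih, Finset.sum_cons]

lemma Lop_Xpow (m : ℕ → ℝ) (n : ℕ) :
    Lop m (X ^ n : Polynomial ℝ) = ∑ k ∈ Finset.range n, C (m (n - 1 - k)) * X ^ k := by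
  rw [X_pow_eq_monomial, Lop_monomial]; simp

lemma Lop_C_mul (m : ℕ → ℝ) (a : ℝ) (p : Polynomial ℝ) :
    Lop m (C a * p) = C a * Lop m p := by
  induction p using Polynomial.induction_on' with
  | add p q hp hq => rw [mul_add, Lop_add, Lop_add, hp, hq, mul_add]
  | monomial n b =>
      rw [C_mul_monomial, Lop_monomial, Lop_monomial, C_mul]; ring

lemma coeff_sum_CX (c : ℕ → ℝ) (n d : ℕ) :
    (∑ k ∈ Finset.range n, C (c k) * X ^ k).coeff d = if d < n then c d else 0 := by
  rw [Polynomial.finset_sum_coeff]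
  simp only [Polynomial.coeff_C_mul, Polynomial.coeff_X_pow, mul_ite, mul_one, mul_zero]
  rw [Finset.sum_ite_eq (Finset.range n) d c]; simp [Finset.mem_range]

lemma Lop_Lop_Xpow (mμ mν : ℕ → ℝ) (n : ℕ) :
    Lop mν (Lop mμ (X ^ n : Polynomial ℝ))
      = ∑ k ∈ Finset.range n, C (mμ (n-1-k)) * ∑ j ∈ Finset.range k, C (mν (k-1-j)) * X ^ j := by
  rw [Lop_Xpow, Lop_sum]
  refine Finset.sum_congr rfl fun k _ => ?_
  rw [C_mul_X_pow_eq_monomial, Lop_monomial]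

lemma sum_shift (mμ mν : ℕ → ℝ) (d n : ℕ) (h : d < n) :
    ∑ k ∈ Finset.range n, mμ (n-1-k) * (if d < k then mν (k-1-d) else 0)
      = ∑ i ∈ Finset.range (n-d-1), mν i * mμ (n-d-2-i) := by
  rw [Finset.range_eq_Ico, ← Finset.sum_Ico_consecutive _ (Nat.zero_le (d+1)) (by omega : d+1 ≤ n)]
  have hz : ∑ k ∈ Finset.Ico 0 (d+1), mμ (n-1-k) * (if d < k then mν (k-1-d) else 0) = 0 := by
    refine Finset.sum_eq_zero fun k hk => ?_
    rw [Finset.mem_Ico] at hk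
    rw [if_neg (by omega)]; ring
  rw [hz, zero_add, Finset.sum_Ico_eq_sum_range]
  have hnd : n - (d+1) = n - d - 1 := by omega
  rw [hnd]
  refine Finset.sum_congr rfl fun i hi => ?_
  rw [Finset.mem_range] at hi
  rw [if_pos (by omega)]
  have e1 : n - 1 - (d + 1 + i) = n - d - 2 - i := by omega
  have e2 : d + 1 + i - 1 - d = i := by omega
  rw [e1, e2, mul_comm]

lemma key (mμ mν : ℕ → ℝ) (β γ : ℝ) (h0 : mμ 0 = 1)
    (hs : ∀ n : ℕ, 1 ≤ n →
      mμ n = β * mμ (n - 1) + γ * ∑ i ∈ Finset.range (n - 1), mν i * mμ (n - 2 - i))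
    (n : ℕ) :
    C γ * Lop mν (Lop mμ (X ^ n : Polynomial ℝ)) - (X - C β) * Lop mμ (X ^ n)
      = C (mμ n) - X ^ n := by
  have hB : ∀ j : ℕ, (Lop mμ (X ^ n : Polynomial ℝ)).coeff j
      = if j < n then mμ (n-1-j) else 0 := fun j => by rw [Lop_Xpow, coeff_sum_CX]
  have hA : ∀ d : ℕ, (Lop mν (Lop mμ (X ^ n : Polynomial ℝ))).coeff d
      = ∑ k ∈ Finset.range n, mμ (n-1-k) * (if d < k then mν (k-1-d) else 0) := by
    intro d
    rw [Lop_Lop_Xpow, Polynomial.finset_sum_coeff]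
    refine Finset.sum_congr rfl fun k _ => ?_
    rw [Polynomial.coeff_C_mul, coeff_sum_CX]
  ext d
  rw [sub_mul]
  simp only [Polynomial.coeff_sub, Polynomial.coeff_C_mul, Polynomial.coeff_X_pow,
    Polynomial.coeff_C, hA, hB]
  have hXB : (X * Lop mμ (X ^ n : Polynomial ℝ)).coeff d
      = if 1 ≤ d ∧ d ≤ n then mμ (n - d) else 0 := by
    cases d with
    | zero => simp [Polynomial.mul_coeff_zero]
    | succ e =>
        rw [Polynomial.coeff_X_mul, hB e]
        by_cases he : e < n
        · rw [if_pos he, if_pos ⟨by omega, by omega⟩]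
          congr 1; omega
        · rw [if_neg he, if_neg (by omega)]
  rw [hXB]
  by_cases hd : d < n
  · have h1 := hs (n - d) (by omega)
    rw [sum_shift mμ mν d n hd]
    have e3 : n - 1 - d = n - d - 1 := by omega
    rw [e3]
    split_ifs with c1 c2 c3 c4 c5 c6 c7 c8 <;>
      first
        | (exfalso; omega)
        | ring1
        | ((try simp only [Nat.sub_zero] at h1 ⊢); linarith)
        | (rw [show n - d = n from by omega] at h1 ⊢; (try simp only [Nat.sub_zero] at h1 ⊢); linarith)
  · have hz : ∑ k ∈ Finset.range n, mμ (n-1-k) * (if d < k then mν (k-1-d) else 0) = 0 := by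
      refine Finset.sum_eq_zero fun k hk => ?_
      rw [Finset.mem_range] at hk
      rw [if_neg (by omega)]; ring
    rw [hz]
    split_ifs with c1 c2 c3 c4 c5 c6 c7 c8 <;>
      first
        | (exfalso; omega)
        | ring1
        | (rw [show n - d = 0 from by omega]; linarith)
        | (rw [show n = 0 from by omega]; linarith)

lemma integrable_pow (μ : Measure ℝ) [IsFiniteMeasure μ] (h : CompactSupp μ) (n : ℕ) :
    Integrable (fun x => x ^ n) μ := by
  obtain ⟨K, hK, hK0⟩ := h
  obtain ⟨M, hM⟩ := hK.exists_bound_of_continuousOn (continuous_pow n).continuousOn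
  refine (integrable_const M).mono' (continuous_pow n).aestronglyMeasurable ?_
  filter_upwards [measure_eq_zero_iff_ae_notMem.mp hK0] with x hx
  exact hM x (not_not.mp hx)

lemma integral_poly (μ : Measure ℝ) [IsFiniteMeasure μ] (h : CompactSupp μ) (f : Polynomial ℝ) :
    ∫ x, f.eval x ∂μ = f.sum fun n a => a * mom μ n := by
  have hev : ∀ x : ℝ, f.eval x = ∑ n ∈ f.support, f.coeff n * x ^ n := fun x => by
    rw [Polynomial.eval_eq_sum, Polynomial.sum]
  simp_rw [hev]
  rw [integral_finset_sum _ (fun n _ => (integrable_pow μ h n).const_mul _)]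
  simp_rw [integral_const_mul]
  rw [Polynomial.sum]
  rfl

lemma Isum_add (μ : Measure ℝ) (p q : Polynomial ℝ) :
    ((p + q).sum fun n a => a * mom μ n) = (p.sum fun n a => a * mom μ n)
      + q.sum fun n a => a * mom μ n := by
  apply Polynomial.sum_add_index
  · intro n; simp
  · intro n a b; rw [add_mul]


theorem stmt15 (μ ν : Measure ℝ) [IsProbabilityMeasure μ] [IsProbabilityMeasure ν]
    (hcsμ : CompactSupp μ) (hcsν : CompactSupp ν)
    (hinfμ : (msupport μ).Infinite) (hinfν : (msupport ν).Infinite)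
    (β : ℝ) (γ : ℝ) (hγ : 0 < γ)
    (hshift : JacobiShift β γ (mom ν) (mom μ)) :
    ∀ f : Polynomial ℝ,
      Lop (mom ν) (Lop (mom μ) f) - C γ⁻¹ * (X - C β) * Lop (mom μ) f
        = C γ⁻¹ * (C (∫ x, f.eval x ∂μ) - f) := by
  intro f
  have hγ' : γ ≠ 0 := ne_of_gt hγ
  have h0 : mom μ 0 = 1 := by simp [mom]
  have key' : ∀ g : Polynomial ℝ,
      C γ * Lop (mom ν) (Lop (mom μ) g) - (X - C β) * Lop (mom μ) g
        = C (g.sum fun n a => a * mom μ n) - g := by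
    intro g
    induction g using Polynomial.induction_on' with
    | add p q hp hq =>
        rw [Lop_add, Lop_add, Isum_add, C_add]
        linear_combination hp + hq
    | monomial n a =>
        rw [Polynomial.sum_monomial_index _ _ (by simp), ← C_mul_X_pow_eq_monomial,
          Lop_C_mul, Lop_C_mul, C_mul]
        linear_combination C a * key (mom μ) (mom ν) β γ h0 hshift n
  have hInv : (C γ : Polynomial ℝ) * C γ⁻¹ = 1 := by
    rw [← C_mul, mul_inv_cancel₀ hγ', C_1]
  have hC : (C γ : Polynomial ℝ) ≠ 0 := by simpa using hγ'
  apply mul_left_cancel₀ hC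
  rw [integral_poly μ hcsμ]
  linear_combination key' f - ((X - C β) * Lop (mom μ) f + C (f.sum fun n a => a * mom μ n) - f) * hInv
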